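/- Let V, W be closed subspaces of H with H = V ⊕ W⊥, (W,w), (V,v) Bessel fusion sequences for W, V, and Q ∈ L(K_W,K_V) with T*_{W,w}|_V injective, T_{V,v}Q surjective, and (T*_{W,w} T_{V,v} Q)² = T*_{W,w} T_{V,v} Q. Then T_{V,v} Q T*_{W,w} f = f for all f ∈ V. -/

import Mathlib

/-- Conversely: if `T_W*|_V` is injective, `Im(T_V Q) = V`, and `T_W* T_V Q` is
idempotent, then `T_V Q T_W* f = f` for all `f ∈ V`. -/
theorem injective_surjective_idempotent_implies_dual_on_V
    {H : Type*} [NormedAddCommGroup H] [InnerProductSpace ℂ H] [CompleteSpace H]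
    {I : Type*} (V W : Submodule ℂ H) [CompleteSpace V] [CompleteSpace W]
    (hcompl : IsCompl V Wᗮ)
    (Wi Vi : I → Submodule ℂ H) [∀ i, CompleteSpace (Wi i)] [∀ i, CompleteSpace (Vi i)]
    (hWiW : ∀ i, Wi i ≤ W) (hViV : ∀ i, Vi i ≤ V)
    (w v : I → ℝ) (hw : ∀ i, 0 < w i) (hv : ∀ i, 0 < v i)
    (TW : lp (fun i => Wi i) 2 →L[ℂ] H)
    (hTW : ∀ c, HasSum (fun i => w i • (c i : H)) (TW c))
    (TV : lp (fun i => Vi i) 2 →L[ℂ] H)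
    (hTV : ∀ c, HasSum (fun i => v i • (c i : H)) (TV c))
    (Q : lp (fun i => Wi i) 2 →L[ℂ] lp (fun i => Vi i) 2)
    (hinj : Set.InjOn TW.adjoint (V : Set H))
    (hsurj : LinearMap.range (TV.comp Q : lp (fun i => Wi i) 2 →ₗ[ℂ] H) = V)
    (hidem : (TW.adjoint.comp (TV.comp Q)).comp (TW.adjoint.comp (TV.comp Q))
        = TW.adjoint.comp (TV.comp Q)) :
    ∀ f ∈ V, TV (Q (TW.adjoint f)) = f := by
  intro f hf
  obtain ⟨g, hg⟩ : ∃ g, TV (Q g) = f := by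
    have : f ∈ LinearMap.range (TV.comp Q : lp (fun i => Wi i) 2 →ₗ[ℂ] H) := hsurj ▸ hf
    obtain ⟨g, hg⟩ := this
    exact ⟨g, hg⟩
  have hmem : TV (Q (TW.adjoint f)) ∈ V := by
    rw [← hsurj]
    exact ⟨TW.adjoint f, rfl⟩
  apply hinj hmem hf
  have := congrFun (congrArg DFunLike.coe hidem) g
  simpa [ContinuousLinearMap.comp_apply, hg] using this
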